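/- The ordinary generating function Ω(q,s,z) = ∑_{N≥0} G_N(q,s) z^N of the q-s Catalan numbers satisfies the functional equation Ω(q,s,z) − 1 = s·z·Ω(q,s,z)·Ω(q,1,qz), as an identity of formal power series in z. -/

import Mathlib

open Finset

/-- Height of a ±1 path after `k` steps (`true` = up-step, `false` = down-step). -/
def dheight (w : List Bool) (k : ℕ) : ℤ :=
  ((w.take k).map (fun b => if b then (1 : ℤ) else -1)).sum

/-- A Dyck path: heights stay nonnegative and the path ends at height 0. -/
def IsDyck (w : List Bool) : Prop :=
  (∀ k ∈ Finset.range (w.length + 1), 0 ≤ dheight w k) ∧ dheight w w.length = 0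

/-- The area (number of full lattice squares) under a Dyck path:
`a(w) = (∑_{k=1}^{2N} h_k - N) / 2`. -/
def darea (w : List Bool) : ℤ :=
  ((∑ k ∈ Finset.range w.length, dheight w (k + 1)) - (w.length : ℤ) / 2) / 2

/-- Number of returns of the path to height zero (endpoint counted, start not). -/
def dreturns (w : List Bool) : ℕ :=
  ((Finset.Icc 1 w.length).filter (fun k => dheight w k = 0)).card

-- The q-s Catalan number `G_N(q,s) = ∑_{w ∈ D_N} q^{a(w)} s^{m(w)}`.
open scoped Classical in
noncomputable def Gqs (N : ℕ) (q s : ℝ) : ℝ :=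
  ∑ f : Fin (2 * N) → Bool,
    if IsDyck (List.ofFn f)
    then q ^ (darea (List.ofFn f)).toNat * s ^ dreturns (List.ofFn f)
    else 0

-- basic height lemmas
lemma dheight_zero (w : List Bool) : dheight w 0 = 0 := rfl

lemma dheight_nil (k : ℕ) : dheight [] k = 0 := by simp [dheight]

lemma dheight_take (w : List Bool) (m k : ℕ) (h : k ≤ m) :
    dheight (w.take m) k = dheight w k := by
  unfold dheight; rw [List.take_take, min_eq_left h]

lemma dheight_append_left (a b : List Bool) (k : ℕ) (h : k ≤ a.length) :
    dheight (a ++ b) k = dheight a k := by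
  unfold dheight; rw [List.take_append_of_le_length h]

lemma dheight_append (a b : List Bool) (k : ℕ) :
    dheight (a ++ b) (a.length + k) = dheight a a.length + dheight b k := by
  unfold dheight
  rw [List.take_append, List.take_length, List.map_append, List.sum_append]
  rw [List.take_of_length_le (by omega), Nat.add_sub_cancel_left]

lemma dheight_cons (b : Bool) (w : List Bool) (k : ℕ) :
    dheight (b :: w) (k + 1) = (if b then (1:ℤ) else -1) + dheight w k := by
  simp [dheight]

lemma dheight_succ (w : List Bool) (k : ℕ) (h : k < w.length) :
    dheight w (k + 1) = dheight w k + (if w[k] then (1:ℤ) else -1) := by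
  unfold dheight
  rw [List.take_succ, List.getElem?_eq_getElem h, Option.toList_some, List.map_append,
    List.sum_append]
  simp

lemma dheight_parity (w : List Bool) (k : ℕ) (hk : k ≤ w.length) :
    Even (dheight w k + k) := by
  induction k with
  | zero => simp [dheight_zero]
  | succ n ih =>
    have hn : n < w.length := hk
    have h1 := ih (le_of_lt hn)
    rw [dheight_succ w n hn]
    push_cast
    rcases h1 with ⟨c, hc⟩
    by_cases hb : w[n]
    · exact ⟨c + 1, by simp [hb]; linarith⟩
    · exact ⟨c, by simp [hb]; linarith⟩

lemma dheight_odd_pos (w : List Bool) (hw : IsDyck w) (k : ℕ) (hk : k ≤ w.length)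
    (hodd : ¬ (2 ∣ k)) : 1 ≤ dheight w k := by
  have h0 : 0 ≤ dheight w k := hw.1 k (by simp; omega)
  have hpar := dheight_parity w k hk
  rcases hpar with ⟨c, hc⟩
  rcases Nat.even_or_odd k with he | ho
  · exact absurd he.two_dvd hodd
  · rcases ho with ⟨m, hm⟩
    subst hm
    omega

noncomputable def hsum (w : List Bool) : ℤ := ∑ k ∈ Finset.range w.length, dheight w (k + 1)

lemma darea_def (w : List Bool) : darea w = (hsum w - (w.length : ℤ) / 2) / 2 := rfl

lemma even_sum_int {n : ℕ} {f : ℕ → ℤ} (h : ∀ k ∈ Finset.range n, Even (f k)) :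
    Even (∑ k ∈ Finset.range n, f k) := by
  induction n with
  | zero => simp
  | succ m ih =>
    rw [Finset.sum_range_succ]
    exact (ih fun k hk => h k (by simp at hk ⊢; omega)).add (h m (by simp))

lemma gauss_even (m : ℕ) :
    Even ((∑ k ∈ Finset.range (2 * m), ((k : ℤ) + 1)) + m) := by
  induction m with
  | zero => simp
  | succ n ih =>
    have : 2 * (n + 1) = 2 * n + 1 + 1 := by ring
    rw [this, Finset.sum_range_succ, Finset.sum_range_succ]
    rcases ih with ⟨c, hc⟩
    exact ⟨c + 2 * n + 2, by push_cast at hc ⊢; linarith⟩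

lemma sum_lb (m : ℕ) (f : ℕ → ℤ) (h0 : ∀ k < 2 * m, 0 ≤ f k)
    (h1 : ∀ k < 2 * m, 2 ∣ k → 1 ≤ f k) :
    (m : ℤ) ≤ ∑ k ∈ Finset.range (2 * m), f k := by
  induction m with
  | zero => simp
  | succ n ih =>
    have e : 2 * (n + 1) = 2 * n + 1 + 1 := by ring
    rw [e, Finset.sum_range_succ, Finset.sum_range_succ]
    have hih := ih (fun k hk => h0 k (by omega)) (fun k hk => h1 k (by omega))
    have ha := h1 (2 * n) (by omega) ⟨n, by ring⟩
    have hb := h0 (2 * n + 1) (by omega)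
    push_cast
    linarith

/-- For a Dyck path of length `2*m`, `hsum w - m` is even and nonnegative,
and `darea w = (hsum w - m)/2`. -/
lemma acore_spec (w : List Bool) (hw : IsDyck w) (m : ℕ) (hm : w.length = 2 * m) :
    ∃ c : ℤ, 0 ≤ c ∧ hsum w = 2 * c + m ∧ darea w = c := by
  have heven : Even (hsum w - m) := by
    have h1 : Even (∑ k ∈ Finset.range (2 * m), (dheight w (k + 1) + ((k : ℤ) + 1))) := by
      apply even_sum_int
      intro k hk
      simp only [Finset.mem_range] at hk
      have := dheight_parity w (k + 1) (by omega)
      push_cast at this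
      exact this
    have h2 := gauss_even m
    have hsplit : ∑ k ∈ Finset.range (2 * m), (dheight w (k + 1) + ((k : ℤ) + 1))
        = hsum w + ∑ k ∈ Finset.range (2 * m), ((k : ℤ) + 1) := by
      rw [Finset.sum_add_distrib, hsum, hm]
    rw [hsplit] at h1
    rcases h1 with ⟨a, ha⟩
    rcases h2 with ⟨b, hb⟩
    exact ⟨a - b, by linarith⟩
  have hnn : (m : ℤ) ≤ hsum w := by
    rw [hsum, hm]
    apply sum_lb
    · intro k hk; exact hw.1 (k + 1) (by simp; omega)
    · intro k hk hdd
      exact dheight_odd_pos w hw (k + 1) (by omega) (by omega)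
  rcases heven with ⟨c, hc⟩
  refine ⟨c, by linarith, by linarith, ?_⟩
  rw [darea_def, hm]
  push_cast
  omega

-- the "last arch" composition Φ(w₁, w₂) = w₁ ++ true :: w₂ ++ [false]
lemma phi_eq (w1 w2 : List Bool) :
    w1 ++ true :: w2 ++ [false] = (w1 ++ [true]) ++ (w2 ++ [false]) := by simp

lemma phi_length (w1 w2 : List Bool) :
    (w1 ++ true :: w2 ++ [false]).length = w1.length + w2.length + 2 := by
  simp; omega

lemma dheight_phi_left (w1 w2 : List Bool) (k : ℕ) (hk : k ≤ w1.length) :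
    dheight (w1 ++ true :: w2 ++ [false]) k = dheight w1 k := by
  rw [phi_eq, dheight_append_left _ _ _ (by simp; omega),
    dheight_append_left _ _ _ (by omega)]

lemma dheight_phi_mid (w1 w2 : List Bool) (k : ℕ) (hk : k ≤ w2.length) :
    dheight (w1 ++ true :: w2 ++ [false]) (w1.length + (k + 1)) =
      dheight w1 w1.length + 1 + dheight w2 k := by
  rw [phi_eq]
  have harith : w1.length + (k + 1) = (w1 ++ [true]).length + k := by simp; omega
  rw [harith, dheight_append (w1 ++ [true]) (w2 ++ [false]) k,
    dheight_append_left w2 [false] k hk,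
    show (w1 ++ [true]).length = w1.length + 1 from by simp,
    dheight_append w1 [true] 1,
    show dheight [true] 1 = 1 from by simp [dheight]]


lemma dheight_phi_end (w1 w2 : List Bool) :
    dheight (w1 ++ true :: w2 ++ [false]) (w1.length + w2.length + 2) =
      dheight w1 w1.length + dheight w2 w2.length := by
  rw [phi_eq]
  have harith : w1.length + w2.length + 2 = (w1 ++ [true]).length + (w2.length + 1) := by
    simp; omega
  rw [harith, dheight_append, dheight_append w2 [false] 1,
    show (w1 ++ [true]).length = w1.length + 1 from by simp,
    dheight_append w1 [true] 1]
  have h1 : dheight [true] 1 = 1 := by simp [dheight]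
  have h2 : dheight [false] 1 = -1 := by simp [dheight]
  rw [h1, h2]; ring

lemma isDyck_phi {w1 w2 : List Bool} (h1 : IsDyck w1) (h2 : IsDyck w2) :
    IsDyck (w1 ++ true :: w2 ++ [false]) := by
  constructor
  · intro k hk
    rw [phi_length] at hk
    simp only [Finset.mem_range] at hk
    rcases Nat.lt_or_ge k (w1.length + 1) with h | h
    · rw [dheight_phi_left w1 w2 k (by omega)]
      exact h1.1 k (by simp; omega)
    · rcases Nat.lt_or_ge k (w1.length + w2.length + 2) with h' | h'
      · obtain ⟨m, hm, rfl⟩ : ∃ m, m ≤ w2.length ∧ k = w1.length + (m + 1) :=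
          ⟨k - w1.length - 1, by omega, by omega⟩
        rw [dheight_phi_mid w1 w2 m hm, h1.2]
        have := h2.1 m (by simp; omega)
        linarith
      · have hk' : k = w1.length + w2.length + 2 := by omega
        rw [hk', dheight_phi_end, h1.2, h2.2]
        norm_num
  · rw [phi_length, dheight_phi_end, h1.2, h2.2]
    norm_num

lemma hsum_phi {w1 w2 : List Bool} (h1 : IsDyck w1) (h2 : IsDyck w2) :
    hsum (w1 ++ true :: w2 ++ [false]) = hsum w1 + hsum w2 + w2.length + 1 := by
  unfold hsum
  rw [phi_length]
  have hsplit : w1.length + w2.length + 2 = w1.length + (w2.length + 2) := by ring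
  rw [hsplit, Finset.sum_range_add]
  have hA : ∑ k ∈ Finset.range w1.length,
      dheight (w1 ++ true :: w2 ++ [false]) (k + 1) =
      ∑ k ∈ Finset.range w1.length, dheight w1 (k + 1) := by
    apply Finset.sum_congr rfl
    intro k hk
    simp only [Finset.mem_range] at hk
    exact dheight_phi_left w1 w2 (k + 1) (by omega)
  rw [hA]
  have hB : ∑ k ∈ Finset.range (w2.length + 2),
      dheight (w1 ++ true :: w2 ++ [false]) (w1.length + k + 1) =
      (∑ k ∈ Finset.range (w2.length + 1), (1 + dheight w2 k)) + 0 := by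
    rw [Finset.sum_range_succ]
    congr 1
    · apply Finset.sum_congr rfl
      intro k hk
      simp only [Finset.mem_range] at hk
      rw [show w1.length + k + 1 = w1.length + (k + 1) from by ring,
        dheight_phi_mid w1 w2 k (by omega), h1.2]
      ring
    · rw [show w1.length + (w2.length + 1) + 1 = w1.length + w2.length + 2 from by ring,
        dheight_phi_end, h1.2, h2.2]
      ring
  rw [hB, Finset.sum_add_distrib,
    Finset.sum_range_succ' (fun k => dheight w2 k) w2.length]
  simp [dheight_zero]
  ring

open scoped Classical in
lemma dreturns_phi {w1 w2 : List Bool} (h1 : IsDyck w1) (h2 : IsDyck w2) :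
    dreturns (w1 ++ true :: w2 ++ [false]) = dreturns w1 + 1 := by
  unfold dreturns
  rw [phi_length]
  have hsplit : Finset.Icc 1 (w1.length + w2.length + 2) =
      Finset.Icc 1 w1.length ∪ Finset.Icc (w1.length + 1) (w1.length + w2.length + 2) := by
    ext k; simp only [Finset.mem_Icc, Finset.mem_union]; omega
  rw [hsplit, Finset.filter_union, Finset.card_union_of_disjoint (Finset.disjoint_filter_filter
    (by rw [Finset.disjoint_left]; intro k hk hk';
        simp only [Finset.mem_Icc] at hk hk'; omega))]
  congr 1
  · congr 1
    apply Finset.filter_congr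
    intro k hk
    simp only [Finset.mem_Icc] at hk
    rw [dheight_phi_left w1 w2 k hk.2]
  · have : Finset.filter (fun k => dheight (w1 ++ true :: w2 ++ [false]) k = 0)
        (Finset.Icc (w1.length + 1) (w1.length + w2.length + 2)) =
        {w1.length + w2.length + 2} := by
      ext k
      simp only [Finset.mem_filter, Finset.mem_Icc, Finset.mem_singleton]
      constructor
      · rintro ⟨⟨hl, hr⟩, hz⟩
        by_contra hne
        obtain ⟨m, hm, rfl⟩ : ∃ m, m ≤ w2.length ∧ k = w1.length + (m + 1) :=
          ⟨k - w1.length - 1, by omega, by omega⟩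
        rw [dheight_phi_mid w1 w2 m hm, h1.2] at hz
        have := h2.1 m (by simp; omega)
        linarith
      · rintro rfl
        refine ⟨⟨by omega, le_refl _⟩, ?_⟩
        rw [dheight_phi_end, h1.2, h2.2]
        norm_num
    rw [this, Finset.card_singleton]

-- the split index: largest k < |w| with height 0
noncomputable def splitIdx (w : List Bool) : ℕ :=
  (((Finset.range w.length).filter (fun k => dheight w k = 0)).max).getD 0

lemma splitIdx_spec (w : List Bool) (hl : 0 < w.length) :
    splitIdx w < w.length ∧ dheight w (splitIdx w) = 0 ∧
      ∀ k < w.length, dheight w k = 0 → k ≤ splitIdx w := by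
  set S := (Finset.range w.length).filter (fun k => dheight w k = 0) with hS
  have hne : S.Nonempty := ⟨0, by simp [hS, dheight_zero, hl]⟩
  obtain ⟨a, ha⟩ := Finset.max_of_nonempty hne
  have hmem : a ∈ S := Finset.mem_of_max ha
  have hsp : splitIdx w = a := by rw [splitIdx, ← hS, ha]; rfl
  simp only [hS, Finset.mem_filter, Finset.mem_range] at hmem
  refine ⟨by rw [hsp]; exact hmem.1, by rw [hsp]; exact hmem.2, ?_⟩
  intro k hk hz
  rw [hsp]
  have : k ∈ S := by simp [hS, hk, hz]
  have := Finset.le_max this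
  rw [ha] at this
  exact_mod_cast this

/-- The last-arch decomposition of a nonempty Dyck path. -/
lemma dyck_decomp (w : List Bool) (hw : IsDyck w) (hl : 0 < w.length) :
    w.take (splitIdx w) ++ true :: ((w.drop (splitIdx w + 1)).dropLast ++ [false]) = w ∧
    IsDyck (w.take (splitIdx w)) ∧ IsDyck ((w.drop (splitIdx w + 1)).dropLast) ∧
    (w.take (splitIdx w)).length = splitIdx w ∧
    ((w.drop (splitIdx w + 1)).dropLast).length = w.length - splitIdx w - 2 ∧
    2 ∣ splitIdx w ∧ splitIdx w + 2 ≤ w.length := by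
  obtain ⟨hlt, hz, hmax⟩ := splitIdx_spec w hl
  set n1 := splitIdx w with hn1
  -- heights strictly positive strictly after n1, before the end
  have hpos : ∀ k, n1 < k → k < w.length → 1 ≤ dheight w k := by
    intro k h1 h2
    have h0 : 0 ≤ dheight w k := hw.1 k (by simp; omega)
    rcases eq_or_lt_of_le h0 with he | hlt'
    · exfalso; have := hmax k h2 he.symm; omega
    · omega
  -- n1 + 2 ≤ L
  have hn2 : n1 + 2 ≤ w.length := by
    rcases Nat.lt_or_ge (n1 + 1) w.length with h | h
    · omega
    · exfalso
      have hstep := dheight_succ w n1 (by omega)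
      have h2 : dheight w (n1 + 1) = 0 := by
        rw [show n1 + 1 = w.length from by omega]; exact hw.2
      rw [hz, h2] at hstep
      by_cases hb : w[n1]'(by omega) <;> simp [hb] at hstep
  -- step at n1 is up
  have hup : w[n1]'(by omega) = true := by
    by_contra hb
    have hb' : w[n1]'(by omega) = false := by simpa using hb
    have hstep := dheight_succ w n1 (by omega)
    rw [hz, hb'] at hstep
    have hge := hpos (n1 + 1) (by omega) (by omega)
    simp at hstep
    rw [hstep] at hge
    norm_num at hge
  -- height at L - 1 is 1, last step down
  have hLm1 : dheight w (w.length - 1) = 1 := by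
    have hstep := dheight_succ w (w.length - 1) (by omega)
    rw [show w.length - 1 + 1 = w.length from by omega, hw.2] at hstep
    have hge := hpos (w.length - 1) (by omega) (by omega)
    by_cases hb : w[w.length - 1]'(by omega) <;> simp [hb] at hstep <;> omega
  have hdown : w[w.length - 1]'(by omega) = false := by
    have hstep := dheight_succ w (w.length - 1) (by omega)
    rw [show w.length - 1 + 1 = w.length from by omega, hw.2, hLm1] at hstep
    by_cases hb : w[w.length - 1]'(by omega) <;> simp [hb] at hstep
    simpa using hb
  -- decomposition of the list
  have hdropne : w.drop (n1 + 1) ≠ [] := by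
    intro h
    have := congrArg List.length h
    simp at this
    omega
  have hlast : (w.drop (n1 + 1)).getLast hdropne = false := by
    rw [List.getLast_eq_getElem, List.getElem_drop]
    have harg : n1 + 1 + ((w.drop (n1 + 1)).length - 1) = w.length - 1 := by simp; omega
    simp only [harg]
    exact hdown
  have hdecomp : w.take n1 ++ true :: ((w.drop (n1 + 1)).dropLast ++ [false]) = w := by
    conv_rhs => rw [← List.take_append_drop n1 w]
    congr 1
    rw [List.drop_eq_getElem_cons (by omega : n1 < w.length), hup]
    congr 1
    rw [← hlast, List.dropLast_append_getLast hdropne]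
  have hlen1 : (w.take n1).length = n1 := by simp; omega
  have hlen2 : ((w.drop (n1 + 1)).dropLast).length = w.length - n1 - 2 := by simp; omega
  -- w.take n1 is Dyck
  have hd1 : IsDyck (w.take n1) := by
    constructor
    · intro k hk
      rw [hlen1] at hk
      simp only [Finset.mem_range] at hk
      rw [dheight_take w n1 k (by omega)]
      exact hw.1 k (by simp; omega)
    · rw [hlen1, dheight_take w n1 n1 le_rfl]
      exact hz
  have hz1 : dheight (w.take n1) n1 = 0 := by
    rw [dheight_take w n1 n1 le_rfl]; exact hz
  -- the middle part is Dyck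
  have hd2 : IsDyck ((w.drop (n1 + 1)).dropLast) := by
    set w2 := (w.drop (n1 + 1)).dropLast with hw2
    have hkey : ∀ k ≤ w2.length, dheight w2 k = dheight w (n1 + (k + 1)) - 1 := by
      intro k hk
      have hmid := dheight_phi_mid (w.take n1) w2 k hk
      have e : List.take n1 w ++ true :: w2 ++ [false] = w := by
        simp only [List.append_assoc, List.cons_append]
        exact hdecomp
      rw [hlen1, e, hz1] at hmid
      omega
    constructor
    · intro k hk
      simp only [Finset.mem_range] at hk
      rw [hkey k (by omega)]
      have := hpos (n1 + (k + 1)) (by omega) (by rw [hlen2] at hk; omega)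
      omega
    · rw [hkey w2.length le_rfl]
      have harg : n1 + (w2.length + 1) = w.length - 1 := by rw [hlen2]; omega
      rw [harg, hLm1]
      norm_num
  -- parity of n1
  have hpar : 2 ∣ n1 := by
    have hp := dheight_parity w n1 (by omega)
    rw [hz] at hp
    simp at hp
    rcases hp with ⟨c, hc⟩
    omega
  exact ⟨hdecomp, hd1, hd2, hlen1, hlen2, hpar, hn2⟩

open scoped Classical in
noncomputable def dyckF (n : ℕ) : Finset (List Bool) :=
  ((Finset.univ : Finset (Fin n → Bool)).image List.ofFn).filter IsDyck

open scoped Classical in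
lemma mem_dyckF {n : ℕ} {w : List Bool} : w ∈ dyckF n ↔ w.length = n ∧ IsDyck w := by
  simp only [dyckF, Finset.mem_filter, Finset.mem_image, Finset.mem_univ, true_and]
  constructor
  · rintro ⟨⟨f, rfl⟩, hd⟩
    exact ⟨by simp, hd⟩
  · rintro ⟨rfl, hd⟩
    exact ⟨⟨fun i => w[(i : ℕ)], List.ofFn_getElem (xs := w)⟩, hd⟩

open scoped Classical in
lemma Gqs_eq_sum_dyckF (N : ℕ) (q s : ℝ) :
    Gqs N q s = ∑ w ∈ dyckF (2 * N), q ^ (darea w).toNat * s ^ dreturns w := by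
  rw [Gqs, dyckF, Finset.sum_filter,
    Finset.sum_image (fun f _ g _ h => List.ofFn_injective h)]

lemma isDyck_nil : IsDyck [] := by
  constructor
  · intro k hk
    simp at hk
    subst hk
    simp [dheight_zero]
  · simp [dheight_nil]

lemma Gqs_zero (q s : ℝ) : Gqs 0 q s = 1 := by
  rw [Gqs_eq_sum_dyckF]
  have : dyckF (2 * 0) = {[]} := by
    ext w
    rw [mem_dyckF]
    simp only [Finset.mem_singleton]
    constructor
    · rintro ⟨hl, _⟩
      exact List.eq_nil_of_length_eq_zero (by omega)
    · rintro rfl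
      exact ⟨by simp, isDyck_nil⟩
  rw [this, Finset.sum_singleton]
  simp [darea, dreturns, dheight_nil]

lemma weight_phi (q s : ℝ) {w1 w2 : List Bool} (h1 : IsDyck w1) (h2 : IsDyck w2)
    (a b : ℕ) (ha : w1.length = 2 * a) (hb : w2.length = 2 * b) :
    q ^ (darea (w1 ++ true :: w2 ++ [false])).toNat *
        s ^ dreturns (w1 ++ true :: w2 ++ [false]) =
      s * q ^ b * (q ^ (darea w1).toNat * s ^ dreturns w1) *
        (q ^ (darea w2).toNat * (1 : ℝ) ^ dreturns w2) := by
  obtain ⟨c1, hc1n, hc1s, hc1a⟩ := acore_spec w1 h1 a ha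
  obtain ⟨c2, hc2n, hc2s, hc2a⟩ := acore_spec w2 h2 b hb
  have hphi := isDyck_phi h1 h2
  have hlen : (w1 ++ true :: w2 ++ [false]).length = 2 * (a + b + 1) := by
    rw [phi_length]; omega
  obtain ⟨c, hcn, hcs, hca⟩ := acore_spec _ hphi (a + b + 1) hlen
  have hs := hsum_phi h1 h2
  rw [hc1s, hc2s, hcs, hb] at hs
  have hc : c = c1 + c2 + b := by push_cast at hs; omega
  rw [dreturns_phi h1 h2, hca, hc1a, hc2a, hc,
    show (c1 + c2 + (b : ℤ)).toNat = c1.toNat + c2.toNat + b from by omega,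
    pow_add, pow_add, pow_add, one_pow]
  ring

open scoped Classical in
lemma dyck_sum_rec (q s : ℝ) (N : ℕ) :
    (∑ w ∈ dyckF (2 * (N + 1)), q ^ (darea w).toNat * s ^ dreturns w) =
      ∑ x ∈ (Finset.range (N + 1)).sigma
          (fun j => dyckF (2 * (N - j)) ×ˢ dyckF (2 * j)),
        s * q ^ x.1 * (q ^ (darea x.2.1).toNat * s ^ dreturns x.2.1) *
          (q ^ (darea x.2.2).toNat * (1 : ℝ) ^ dreturns x.2.2) := by
  apply Finset.sum_nbij'
    (i := fun w => (⟨(w.length - splitIdx w - 2) / 2,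
      (w.take (splitIdx w), (w.drop (splitIdx w + 1)).dropLast)⟩ :
      Σ _ : ℕ, List Bool × List Bool))
    (j := fun x => x.2.1 ++ true :: x.2.2 ++ [false])
  -- hi : forward map lands in sigma set
  · intro w hw
    rw [mem_dyckF] at hw
    obtain ⟨hL, hd⟩ := hw
    obtain ⟨hdec, hd1, hd2, hl1, hl2, hpar, hle⟩ := dyck_decomp w hd (by omega)
    rw [Finset.mem_sigma, Finset.mem_range, Finset.mem_product, mem_dyckF, mem_dyckF]
    dsimp only
    obtain ⟨m, hm⟩ := hpar
    refine ⟨by omega, ⟨by omega, hd1⟩, ⟨by omega, hd2⟩⟩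
  -- hj : backward map lands in dyckF
  · rintro ⟨j, w1, w2⟩ hx
    rw [Finset.mem_sigma, Finset.mem_range, Finset.mem_product, mem_dyckF, mem_dyckF] at hx
    dsimp only at hx
    obtain ⟨hj, ⟨hl1, hd1⟩, ⟨hl2, hd2⟩⟩ := hx
    rw [mem_dyckF]
    dsimp only
    refine ⟨by rw [phi_length]; omega, isDyck_phi hd1 hd2⟩
  -- left inverse : j (i w) = w
  · intro w hw
    rw [mem_dyckF] at hw
    obtain ⟨hL, hd⟩ := hw
    obtain ⟨hdec, hd1, hd2, hl1, hl2, hpar, hle⟩ := dyck_decomp w hd (by omega)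
    simp only [List.append_assoc, List.cons_append, List.nil_append]
    exact hdec
  -- right inverse : i (j x) = x
  · rintro ⟨j, w1, w2⟩ hx
    rw [Finset.mem_sigma, Finset.mem_range, Finset.mem_product, mem_dyckF, mem_dyckF] at hx
    dsimp only at hx
    obtain ⟨hj, ⟨hl1, hd1⟩, ⟨hl2, hd2⟩⟩ := hx
    set Φ := w1 ++ true :: w2 ++ [false] with hΦ
    have hΦeq : Φ = (w1 ++ [true]) ++ (w2 ++ [false]) := by simp [hΦ]
    have hΦlen : Φ.length = w1.length + w2.length + 2 := phi_length w1 w2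
    -- splitIdx Φ = w1.length
    have hsplit : splitIdx Φ = w1.length := by
      obtain ⟨hlt, hz, hmax⟩ := splitIdx_spec Φ (by omega)
      have h1 : w1.length ≤ splitIdx Φ := by
        apply hmax w1.length (by omega)
        rw [dheight_phi_left w1 w2 w1.length le_rfl]
        exact hd1.2
      have h2 : splitIdx Φ ≤ w1.length := by
        by_contra hgt
        push_neg at hgt
        obtain ⟨m, hm, he⟩ : ∃ m, m ≤ w2.length ∧ splitIdx Φ = w1.length + (m + 1) :=
          ⟨splitIdx Φ - w1.length - 1, by omega, by omega⟩
        rw [he, dheight_phi_mid w1 w2 m hm, hd1.2] at hz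
        have := hd2.1 m (by simp; omega)
        linarith
      omega
    have htake : Φ.take w1.length = w1 := by
      rw [hΦeq, List.take_append_of_le_length (by simp),
        List.take_append_of_le_length le_rfl, List.take_length]
    have hdrop : (Φ.drop (w1.length + 1)).dropLast = w2 := by
      rw [hΦeq, show w1.length + 1 = (w1 ++ [true]).length from by simp,
        List.drop_left, List.dropLast_concat]
    refine Sigma.ext ?_ (heq_of_eq ?_)
    · dsimp only
      simp only [hsplit, hΦlen]
      omega
    · dsimp only
      simp only [hsplit]
      rw [htake, hdrop]
  -- weights agree
  · intro w hw
    rw [mem_dyckF] at hw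
    obtain ⟨hL, hd⟩ := hw
    obtain ⟨hdec, hd1, hd2, hl1, hl2, hpar, hle⟩ := dyck_decomp w hd (by omega)
    obtain ⟨m, hm⟩ := hpar
    have hwt := weight_phi q s hd1 hd2 m ((w.length - splitIdx w - 2) / 2)
      (by omega) (by omega)
    have hrw : w.take (splitIdx w) ++ true :: (w.drop (splitIdx w + 1)).dropLast ++ [false] = w := by
      simp only [List.append_assoc, List.cons_append, List.nil_append]
      exact hdec
    rw [hrw] at hwt
    dsimp only
    rw [hwt]

lemma Gqs_rec (q s : ℝ) (N : ℕ) :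
    Gqs (N + 1) q s =
      ∑ j ∈ Finset.range (N + 1), s * q ^ j * Gqs (N - j) q s * Gqs j q 1 := by
  rw [Gqs_eq_sum_dyckF, dyck_sum_rec, Finset.sum_sigma]
  apply Finset.sum_congr rfl
  intro j hj
  rw [Finset.sum_product, Gqs_eq_sum_dyckF, Gqs_eq_sum_dyckF, mul_assoc,
    Finset.sum_mul_sum, Finset.mul_sum]
  refine Finset.sum_congr rfl fun w1 _ => ?_
  rw [Finset.mul_sum]
  refine Finset.sum_congr rfl fun w2 _ => ?_
  ring

/-- The generating function `Ω(q,s,z) = ∑_N G_N(q,s) z^N` satisfies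
`Ω(q,s,z) − 1 = s z Ω(q,s,z) Ω(q,1,qz)` as formal power series in `z`. -/
theorem Omega_functional_equation (q s : ℝ) :
    PowerSeries.mk (fun N => Gqs N q s) - 1 =
      PowerSeries.C s * PowerSeries.X *
        PowerSeries.mk (fun N => Gqs N q s) *
        PowerSeries.mk (fun N => Gqs N q 1 * q ^ N) := by
  have hre : PowerSeries.C s * PowerSeries.X *
      PowerSeries.mk (fun N => Gqs N q s) *
      PowerSeries.mk (fun N => Gqs N q 1 * q ^ N) =
      PowerSeries.C s * (PowerSeries.X *
        (PowerSeries.mk (fun N => Gqs N q s) *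
          PowerSeries.mk (fun N => Gqs N q 1 * q ^ N))) := by ring
  rw [hre]
  ext n
  rw [map_sub, PowerSeries.coeff_mk, PowerSeries.coeff_C_mul]
  cases n with
  | zero =>
    simp [Gqs_zero]
  | succ n =>
    rw [PowerSeries.coeff_succ_X_mul, PowerSeries.coeff_mul]
    simp only [PowerSeries.coeff_mk, PowerSeries.coeff_one, Nat.succ_ne_zero, if_false,
      sub_zero]
    rw [Finset.Nat.sum_antidiagonal_eq_sum_range_succ_mk, Gqs_rec,
      ← Finset.sum_range_reflect, Finset.mul_sum]
    apply Finset.sum_congr rfl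
    intro k hk
    simp only [Finset.mem_range] at hk
    rw [show n + 1 - 1 - k = n - k from by omega, show n - (n - k) = k from by omega]
    ring
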